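/- Let p_1 = 1 and q_1 = α with α ∉ {0, 1} and α² - α + 1 ≠ 0. Then p_2 = α + 1 + √(α²-α+1) and q_2 = α + 1 - √(α²-α+1) satisfy the system 2/(p_1 - q_1) = 2/p_1 + 1/(p_1 - p_2) + 1/(p_1 - q_2) and 2/(q_1 - p_1) = 2/q_1 + 1/(q_1 - p_2) + 1/(q_1 - q_2), provided all denominators are nonzero. -/
import Mathlib


theorem stmt_14 (α s p₂ q₂ : ℂ)
    (hα0 : α ≠ 0) (hα1 : α ≠ 1) (hdisc : α ^ 2 - α + 1 ≠ 0)
    (hs : s ^ 2 = α ^ 2 - α + 1)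
    (hp₂ : p₂ = α + 1 + s) (hq₂ : q₂ = α + 1 - s)
    (h1p : (1 : ℂ) - p₂ ≠ 0) (h1q : (1 : ℂ) - q₂ ≠ 0)
    (hαp : α - p₂ ≠ 0) (hαq : α - q₂ ≠ 0) :
    2 / ((1 : ℂ) - α) = 2 / (1 : ℂ) + 1 / (1 - p₂) + 1 / (1 - q₂) ∧
    2 / (α - 1) = 2 / α + 1 / (α - p₂) + 1 / (α - q₂) := by
  have h1α : (1 : ℂ) - α ≠ 0 := sub_ne_zero.mpr (Ne.symm hα1)
  have hα1' : α - 1 ≠ 0 := sub_ne_zero.mpr hα1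
  subst hp₂ hq₂
  refine ⟨?_, ?_⟩ <;> field_simp <;> ring_nf
  · linear_combination (-2*α)*hs
  · linear_combination (-2 : ℂ)*hs
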